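/- Let Z ∈ R^{n×q} with singular values γ_1, …, γ_{n∧q}, σ > 0, and let ω_σ(Z) = (1/2σ)‖Z‖_F² + (n/2)σ. Then the inf-convolution of the nuclear norm with ω_σ satisfies (‖·‖_{S,1} □ ω_σ)(Z) = min over S ⪰ σ·Id_n of (1/2)Tr(Zᵀ S⁻¹ Z) + (1/2)Tr(S). -/

import Mathlib

open Matrix

/-- Singular values of a real `n × q` matrix (padded with zeros to length `n`). -/
noncomputable def singVal {n q : ℕ} (Z : Matrix (Fin n) (Fin q) ℝ) (i : Fin n) : ℝ :=
  Real.sqrt ((Matrix.isHermitian_mul_conjTranspose_self Z).eigenvalues i)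

/-- Nuclear norm (Schatten 1-norm): sum of the singular values. -/
noncomputable def nucNorm {n q : ℕ} (Z : Matrix (Fin n) (Fin q) ℝ) : ℝ :=
  ∑ i, singVal Z i

/-- Frobenius norm of a matrix. -/
noncomputable def frobNorm {n q : ℕ} (A : Matrix (Fin n) (Fin q) ℝ) : ℝ :=
  Real.sqrt (∑ i, ∑ j, (A i j) ^ 2)

lemma singVal_nonneg {n q : ℕ} (Z : Matrix (Fin n) (Fin q) ℝ) (i : Fin n) : 0 ≤ singVal Z i :=
  Real.sqrt_nonneg _

lemma sq_singVal {n q : ℕ} (Z : Matrix (Fin n) (Fin q) ℝ) (i : Fin n) :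
    singVal Z i ^ 2 = (Matrix.isHermitian_mul_conjTranspose_self Z).eigenvalues i :=
  Real.sq_sqrt (Matrix.eigenvalues_self_mul_conjTranspose_nonneg Z i)


lemma traceNonneg {m : ℕ} {M : Matrix (Fin m) (Fin m) ℝ} (h : M.PosSemidef) : 0 ≤ M.trace := by
  rw [Matrix.trace]
  refine Finset.sum_nonneg fun i _ => ?_
  have := h.dotProduct_mulVec_nonneg (Pi.single i 1)
  simpa [Matrix.mulVec_single, Matrix.diag] using this

open scoped MatrixOrder in
lemma traceMulNonneg {m : ℕ} {A B : Matrix (Fin m) (Fin m) ℝ} (hA : A.PosSemidef)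
    (hB : B.PosSemidef) : 0 ≤ (A * B).trace := by
  have h1 : A * B = CFC.sqrt A * (CFC.sqrt A * B) := by
    rw [← mul_assoc, CFC.sqrt_mul_sqrt_self A hA.nonneg]
  rw [h1, Matrix.trace_mul_comm]
  have h2 : (CFC.sqrt A * B) * CFC.sqrt A = CFC.sqrt A * B * (CFC.sqrt A)ᴴ := by
    rw [(CFC.sqrt_nonneg A).posSemidef.1]
  rw [h2]
  exact traceNonneg (hB.mul_mul_conjTranspose_same (CFC.sqrt A))

lemma blockPSD {m k : ℕ} {A : Matrix (Fin m) (Fin m) ℝ} (hA : A.PosSemidef)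
    (K : Matrix (Fin m) (Fin k) ℝ) :
    (Matrix.fromBlocks A (A * K) (Kᴴ * A) (Kᴴ * A * K)).PosSemidef := by
  have h := hA.conjTranspose_mul_mul_same (Matrix.fromCols (1 : Matrix (Fin m) (Fin m) ℝ) K)
  rw [conjTranspose_fromCols_eq_fromRows_conjTranspose, fromRows_mul,
    fromRows_mul_fromCols] at h
  simpa using h

noncomputable def eigU {n q : ℕ} (W : Matrix (Fin n) (Fin q) ℝ) : Matrix (Fin n) (Fin n) ℝ :=
  ((Matrix.isHermitian_mul_conjTranspose_self W).eigenvectorUnitary : Matrix (Fin n) (Fin n) ℝ)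

section Spectral
variable {n q : ℕ} (W : Matrix (Fin n) (Fin q) ℝ)

lemma spectral_decomp :
    W * Wᴴ = eigU W * Matrix.diagonal (fun i => singVal W i ^ 2) * (eigU W)ᴴ := by
  have h := (Matrix.isHermitian_mul_conjTranspose_self W).spectral_theorem
  rw [h, Unitary.conjStarAlgAut_apply]
  congr 2
  funext i
  simp [RCLike.ofReal_real_eq_id, sq_singVal]
  rfl

lemma unitary_mul_conj : eigU W * (eigU W)ᴴ = 1 := by
  rw [← Matrix.star_eq_conjTranspose]
  exact (Matrix.mem_unitaryGroup_iff).mp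
    ((Matrix.isHermitian_mul_conjTranspose_self W).eigenvectorUnitary).2

lemma conj_mul_unitary : (eigU W)ᴴ * eigU W = 1 := by
  rw [← Matrix.star_eq_conjTranspose]
  exact (Matrix.mem_unitaryGroup_iff').mp
    ((Matrix.isHermitian_mul_conjTranspose_self W).eigenvectorUnitary).2

lemma conj_mul_conj (d e : Fin n → ℝ) :
    (eigU W * Matrix.diagonal d * (eigU W)ᴴ) * (eigU W * Matrix.diagonal e * (eigU W)ᴴ)
      = eigU W * Matrix.diagonal (fun i => d i * e i) * (eigU W)ᴴ := by
  have h := conj_mul_unitary W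
  calc (eigU W * Matrix.diagonal d * (eigU W)ᴴ) * (eigU W * Matrix.diagonal e * (eigU W)ᴴ)
      = eigU W * Matrix.diagonal d * ((eigU W)ᴴ * eigU W) * Matrix.diagonal e * (eigU W)ᴴ := by
        simp only [Matrix.mul_assoc]
    _ = eigU W * (Matrix.diagonal d * Matrix.diagonal e) * (eigU W)ᴴ := by
        rw [h]; simp only [Matrix.mul_one, Matrix.mul_assoc]
    _ = _ := by rw [Matrix.diagonal_mul_diagonal]

lemma traceConjU (d : Fin n → ℝ) :
    (eigU W * Matrix.diagonal d * (eigU W)ᴴ).trace = ∑ i, d i := by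
  rw [Matrix.trace_mul_cycle, conj_mul_unitary, Matrix.one_mul, Matrix.trace_diagonal]

end Spectral

lemma conj_isHermitian {n q : ℕ} (W : Matrix (Fin n) (Fin q) ℝ) (d : Fin n → ℝ) :
    (eigU W * Matrix.diagonal d * (eigU W)ᴴ).IsHermitian :=
  Matrix.isHermitian_mul_mul_conjTranspose _ (Matrix.isHermitian_diagonal _)

lemma exists_good_A {n q : ℕ} (W : Matrix (Fin n) (Fin q) ℝ) {ε : ℝ} (hε : 0 < ε) :
    ∃ A : Matrix (Fin n) (Fin n) ℝ, A.PosSemidef ∧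
      (Matrix.fromBlocks A W Wᴴ (Wᴴ * A⁻¹ * W)).PosSemidef ∧
      A.trace ≤ nucNorm W + n * ε ∧ (Wᴴ * A⁻¹ * W).trace ≤ nucNorm W := by
  set d : Fin n → ℝ := fun i => max (singVal W i) ε with hdd
  have hd : ∀ i, 0 < d i := fun i => lt_of_lt_of_le hε (le_max_right _ _)
  set A := eigU W * Matrix.diagonal d * (eigU W)ᴴ with hA
  set B := eigU W * Matrix.diagonal (fun i => (d i)⁻¹) * (eigU W)ᴴ with hB
  have hAB : A * B = 1 := by
    rw [hA, hB, conj_mul_conj]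
    have : (fun i => d i * (d i)⁻¹) = fun _ => (1 : ℝ) := by
      funext i; exact mul_inv_cancel₀ (hd i).ne'
    rw [this, Matrix.diagonal_one, Matrix.mul_one, unitary_mul_conj]
  have hBA : B * A = 1 := by
    rw [hA, hB, conj_mul_conj]
    have : (fun i => (d i)⁻¹ * d i) = fun _ => (1 : ℝ) := by
      funext i; exact inv_mul_cancel₀ (hd i).ne'
    rw [this, Matrix.diagonal_one, Matrix.mul_one, unitary_mul_conj]
  have hAinv : A⁻¹ = B := Matrix.inv_eq_right_inv hAB
  have hApsd : A.PosSemidef :=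
    (Matrix.posSemidef_diagonal_iff.mpr (fun i => (hd i).le)).mul_mul_conjTranspose_same (eigU W)
  have hBherm : Bᴴ = B := conj_isHermitian W _
  refine ⟨A, hApsd, ?_, ?_, ?_⟩
  · have h := blockPSD hApsd (B * W)
    have e1 : A * (B * W) = W := by rw [← Matrix.mul_assoc, hAB, Matrix.one_mul]
    have e2 : (B * W)ᴴ * A = Wᴴ := by
      rw [Matrix.conjTranspose_mul, hBherm, Matrix.mul_assoc, hBA, Matrix.mul_one]
    have e3 : (B * W)ᴴ * A * (B * W) = Wᴴ * A⁻¹ * W := by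
      rw [e2, hAinv]; simp only [Matrix.mul_assoc]
    rwa [e3, e1, e2] at h
  · rw [hA, traceConjU]
    have : ∀ i, d i ≤ singVal W i + ε := fun i =>
      max_le (le_add_of_nonneg_right hε.le) (le_add_of_nonneg_left (singVal_nonneg W i))
    calc ∑ i, d i ≤ ∑ i, (singVal W i + ε) := Finset.sum_le_sum (fun i _ => this i)
      _ = nucNorm W + n * ε := by
          rw [Finset.sum_add_distrib, nucNorm]
          simp [mul_comm]
  · rw [Matrix.trace_mul_cycle, spectral_decomp W, hAinv, hB, conj_mul_conj, traceConjU]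
    refine Finset.sum_le_sum (fun i _ => ?_)
    rw [← div_eq_mul_inv, div_le_iff₀ (hd i), sq]
    exact mul_le_mul_of_nonneg_left (le_max_left _ _) (singVal_nonneg W i)

lemma nucNorm_le_of_blockPSD {n q : ℕ} {W : Matrix (Fin n) (Fin q) ℝ}
    {A : Matrix (Fin n) (Fin n) ℝ} {B : Matrix (Fin q) (Fin q) ℝ}
    (h : (Matrix.fromBlocks A W Wᴴ B).PosSemidef) :
    2 * nucNorm W ≤ A.trace + B.trace := by
  classical
  set g : Fin n → ℝ := fun i => if singVal W i = 0 then 0 else (singVal W i)⁻¹ with hg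
  set e : Fin n → ℝ := fun i => if singVal W i = 0 then 0 else 1 with he
  set V : Matrix (Fin q) (Fin n) ℝ := Wᴴ * (eigU W * Matrix.diagonal g) with hV
  have hdiag : (eigU W)ᴴ * (W * Wᴴ) * eigU W = Matrix.diagonal (fun i => singVal W i ^ 2) := by
    rw [spectral_decomp W]
    calc (eigU W)ᴴ * (eigU W * Matrix.diagonal (fun i => singVal W i ^ 2) * (eigU W)ᴴ) * eigU W
        = ((eigU W)ᴴ * eigU W) * Matrix.diagonal (fun i => singVal W i ^ 2) *
            ((eigU W)ᴴ * eigU W) := by simp only [Matrix.mul_assoc]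
      _ = _ := by rw [conj_mul_unitary]; simp
  have hUWV : (eigU W)ᴴ * W * V = Matrix.diagonal (singVal W) := by
    have h1 : (eigU W)ᴴ * W * V
        = ((eigU W)ᴴ * (W * Wᴴ) * eigU W) * Matrix.diagonal g := by
      rw [hV]; simp only [Matrix.mul_assoc]
    rw [h1, hdiag, Matrix.diagonal_mul_diagonal]
    have h2 : (fun i => singVal W i ^ 2 * g i) = singVal W := by
      funext i
      by_cases hi : singVal W i = 0
      · simp [hg, hi]
      · simp only [hg, hi, if_false]
        field_simp
    rw [h2]
  have hVt : Vᴴ = Matrix.diagonal g * ((eigU W)ᴴ * W) := by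
    rw [hV]
    simp [Matrix.conjTranspose_mul, Matrix.diagonal_conjTranspose, Matrix.mul_assoc]
  have hVV : Vᴴ * V = Matrix.diagonal e := by
    have h1 : Vᴴ * V
        = Matrix.diagonal g * ((eigU W)ᴴ * (W * Wᴴ) * eigU W * Matrix.diagonal g) := by
      rw [hVt, hV]; simp only [Matrix.mul_assoc]
    rw [h1, hdiag, ← Matrix.mul_assoc, Matrix.diagonal_mul_diagonal,
      Matrix.diagonal_mul_diagonal]
    have h2 : (fun i => g i * (singVal W i ^ 2) * g i) = e := by
      funext i
      by_cases hi : singVal W i = 0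
      · simp [hg, he, hi]
      · simp only [hg, he, hi, if_false]
        field_simp
    rw [show (fun i => g i * singVal W i ^ 2 * g i) = e from h2]
  have hVe : V * Matrix.diagonal e = V := by
    have h1 : V * Matrix.diagonal e
        = Wᴴ * (eigU W * Matrix.diagonal (fun i => g i * e i)) := by
      rw [hV]; simp only [Matrix.mul_assoc, Matrix.diagonal_mul_diagonal]
    rw [h1]
    have h2 : (fun i => g i * e i) = g := by
      funext i
      by_cases hi : singVal W i = 0 <;> simp [hg, he, hi]
    rw [h2, ← hV]
  have hPsym : (V * Vᴴ)ᴴ = V * Vᴴ := by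
    rw [Matrix.conjTranspose_mul, Matrix.conjTranspose_conjTranspose]
  have hPP : (V * Vᴴ) * (V * Vᴴ) = V * Vᴴ := by
    calc (V * Vᴴ) * (V * Vᴴ) = V * (Vᴴ * V) * Vᴴ := by simp only [Matrix.mul_assoc]
      _ = V * Matrix.diagonal e * Vᴴ := by rw [hVV]
      _ = V * Vᴴ := by rw [hVe]
  have h1mP : (1 - V * Vᴴ).PosSemidef := by
    have key : (1 - V * Vᴴ)ᴴ * (1 - V * Vᴴ) = 1 - V * Vᴴ := by
      rw [Matrix.conjTranspose_sub, Matrix.conjTranspose_one, hPsym, Matrix.mul_sub,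
        Matrix.sub_mul, Matrix.sub_mul, hPP]
      simp only [Matrix.one_mul, Matrix.mul_one]
      abel
    have := Matrix.posSemidef_conjTranspose_mul_self (1 - V * Vᴴ)
    rwa [key] at this
  have hBpsd : B.PosSemidef := by
    have h2 := h.submatrix Sum.inr
    have h3 : (Matrix.fromBlocks A W Wᴴ B).submatrix Sum.inr Sum.inr = B := by
      ext i j; simp
    rwa [h3] at h2
  -- main quadratic inequality
  set M : Matrix (Fin n ⊕ Fin q) (Fin n) ℝ := Matrix.fromRows (eigU W) (-V) with hM
  have hquad := h.conjTranspose_mul_mul_same M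
  have hMPM : Mᴴ * Matrix.fromBlocks A W Wᴴ B * M
      = (eigU W)ᴴ * (A * eigU W) - (eigU W)ᴴ * (W * V) - Vᴴ * (Wᴴ * eigU W)
        + Vᴴ * (B * V) := by
    rw [hM, conjTranspose_fromRows_eq_fromCols_conjTranspose, Matrix.mul_assoc,
      fromBlocks_mul_fromRows, fromCols_mul_fromRows]
    simp only [Matrix.conjTranspose_neg, Matrix.mul_add, Matrix.mul_neg, Matrix.neg_mul,
      neg_neg, sub_eq_add_neg]
    abel
  rw [hMPM] at hquad
  have htr := traceNonneg hquad
  rw [Matrix.trace_add, Matrix.trace_sub, Matrix.trace_sub] at htr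
  have t1 : ((eigU W)ᴴ * (A * eigU W)).trace = A.trace := by
    rw [Matrix.trace_mul_comm, Matrix.mul_assoc, unitary_mul_conj, Matrix.mul_one]
  have t2 : ((eigU W)ᴴ * (W * V)).trace = nucNorm W := by
    rw [← Matrix.mul_assoc, hUWV, Matrix.trace_diagonal, nucNorm]
  have t3 : (Vᴴ * (Wᴴ * eigU W)).trace = nucNorm W := by
    have h1 : Vᴴ * (Wᴴ * eigU W) = ((eigU W)ᴴ * W * V)ᴴ := by
      simp only [Matrix.conjTranspose_mul, Matrix.conjTranspose_conjTranspose,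
        Matrix.mul_assoc]
    rw [h1, hUWV, Matrix.diagonal_conjTranspose, Matrix.trace_diagonal]
    simp [nucNorm]
  have t4 : (Vᴴ * (B * V)).trace ≤ B.trace := by
    have hcyc : (Vᴴ * (B * V)).trace = (B * (V * Vᴴ)).trace := by
      rw [Matrix.trace_mul_comm, Matrix.mul_assoc]
    have hsub : B.trace - (B * (V * Vᴴ)).trace = (B * (1 - V * Vᴴ)).trace := by
      rw [Matrix.mul_sub, Matrix.mul_one, Matrix.trace_sub]
    have hnn := traceMulNonneg hBpsd h1mP
    linarith
  linarith

lemma schurTrace {m k : ℕ} {S : Matrix (Fin m) (Fin m) ℝ} (hS : S.PosDef)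
    {Z : Matrix (Fin m) (Fin k) ℝ} {D : Matrix (Fin k) (Fin k) ℝ}
    (h : (Matrix.fromBlocks S Z Zᴴ D).PosSemidef) : (Zᴴ * S⁻¹ * Z).trace ≤ D.trace := by
  have := hS.isUnit.invertible
  rw [Matrix.PosDef.fromBlocks₁₁ Z D hS] at h
  have h2 := traceNonneg h
  rw [Matrix.trace_sub] at h2
  linarith

lemma frobNorm_sq {n q : ℕ} (A : Matrix (Fin n) (Fin q) ℝ) :
    frobNorm A ^ 2 = (Aᴴ * A).trace := by
  rw [frobNorm, Real.sq_sqrt (by positivity)]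
  rw [Matrix.trace]
  simp only [Matrix.diag, Matrix.mul_apply, Matrix.conjTranspose_apply, star_trivial, sq]
  rw [Finset.sum_comm]

lemma nucNorm_nonneg {n q : ℕ} (A : Matrix (Fin n) (Fin q) ℝ) : 0 ≤ nucNorm A :=
  Finset.sum_nonneg fun i _ => singVal_nonneg A i

lemma smul_one_posDef {m : ℕ} {σ : ℝ} (hσ : 0 < σ) :
    ((σ • 1 : Matrix (Fin m) (Fin m) ℝ)).PosDef := by
  have h : (σ • 1 : Matrix (Fin m) (Fin m) ℝ) = Matrix.diagonal (fun _ => σ) := by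
    ext i j
    by_cases hij : i = j <;> simp [Matrix.one_apply, Matrix.diagonal, hij]
  rw [h]
  exact Matrix.posDef_diagonal_iff.mpr (fun _ => hσ)

lemma smul_one_isHermitian {m : ℕ} (σ : ℝ) :
    ((σ • 1 : Matrix (Fin m) (Fin m) ℝ)).IsHermitian := by
  rw [Matrix.IsHermitian, Matrix.conjTranspose_smul, Matrix.conjTranspose_one]
  congr 1

lemma trace_smul_one {m : ℕ} (σ : ℝ) :
    ((σ • 1 : Matrix (Fin m) (Fin m) ℝ)).trace = σ * m := by
  rw [Matrix.trace_smul, Matrix.trace_one]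
  simp [smul_eq_mul]

lemma ereal_le_coe_of_forall {x : EReal} {a : ℝ}
    (h : ∀ δ : ℝ, 0 < δ → x ≤ ((a + δ : ℝ) : EReal)) : x ≤ (a : EReal) := by
  induction x using EReal.rec with
  | bot => exact bot_le
  | coe y =>
      refine EReal.coe_le_coe_iff.mpr (le_of_forall_pos_le_add fun δ hδ => ?_)
      exact EReal.coe_le_coe_iff.mp (h δ hδ)
  | top =>
      exfalso
      have := h 1 one_pos
      rw [top_le_iff] at this
      exact (EReal.coe_ne_top _) this

lemma dir1 {n q : ℕ} (Z : Matrix (Fin n) (Fin q) ℝ) {σ : ℝ} (hσ : 0 < σ)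
    {S : Matrix (Fin n) (Fin n) ℝ} (hS : S.IsHermitian)
    (hS2 : (S - σ • (1 : Matrix (Fin n) (Fin n) ℝ)).PosSemidef) :
    ∃ W : Matrix (Fin n) (Fin q) ℝ,
      nucNorm W + ((1 / (2 * σ)) * frobNorm (Z - W) ^ 2 + (n / 2) * σ)
        ≤ (1 / 2) * (Zᴴ * S⁻¹ * Z).trace + (1 / 2) * S.trace := by
  have hSpd : S.PosDef := by
    have h := Matrix.PosDef.posSemidef_add hS2 (smul_one_posDef hσ)
    rwa [sub_add_cancel] at h
  have hdet : IsUnit S.det := (Matrix.isUnit_iff_isUnit_det S).mp hSpd.isUnit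
  have hSS : S * S⁻¹ = 1 := Matrix.mul_nonsing_inv S hdet
  have hSiH : (S⁻¹)ᴴ = S⁻¹ := hS.inv
  refine ⟨Z - σ • (S⁻¹ * Z), ?_⟩
  set W₀ := Z - σ • (S⁻¹ * Z) with hW₀
  have hW₀H : W₀ᴴ = Zᴴ - σ • (Zᴴ * S⁻¹) := by
    rw [hW₀, Matrix.conjTranspose_sub, Matrix.conjTranspose_smul, Matrix.conjTranspose_mul,
      hSiH]
    norm_num
  have hb := blockPSD hS2 (S⁻¹ * Z)
  have e1 : (S - σ • (1 : Matrix (Fin n) (Fin n) ℝ)) * (S⁻¹ * Z) = W₀ := by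
    rw [Matrix.sub_mul, ← Matrix.mul_assoc, hSS, Matrix.one_mul, Matrix.smul_mul,
      Matrix.one_mul, hW₀]
  have e2 : (S⁻¹ * Z)ᴴ * (S - σ • (1 : Matrix (Fin n) (Fin n) ℝ)) = W₀ᴴ := by
    rw [Matrix.conjTranspose_mul, hSiH, Matrix.mul_sub, Matrix.mul_assoc,
      Matrix.nonsing_inv_mul S hdet, Matrix.mul_one, Matrix.mul_smul, Matrix.mul_one, hW₀H]
  rw [e1, e2] at hb
  have hnuc := nucNorm_le_of_blockPSD hb
  set T1 := (Zᴴ * S⁻¹ * Z).trace with hT1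
  set T2 := (Zᴴ * S⁻¹ * (S⁻¹ * Z)).trace with hT2
  have tA : (S - σ • (1 : Matrix (Fin n) (Fin n) ℝ)).trace = S.trace - σ * n := by
    rw [Matrix.trace_sub, trace_smul_one]
  have tB : (W₀ᴴ * (S⁻¹ * Z)).trace = T1 - σ * T2 := by
    rw [hW₀H, Matrix.sub_mul, Matrix.smul_mul, Matrix.trace_sub, Matrix.trace_smul,
      hT1, hT2, ← Matrix.mul_assoc, ← Matrix.mul_assoc]
    norm_num
  have hfrob : frobNorm (Z - W₀) ^ 2 = σ ^ 2 * T2 := by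
    have hz : Z - W₀ = σ • (S⁻¹ * Z) := by rw [hW₀, sub_sub_cancel]
    rw [hz, frobNorm_sq, Matrix.conjTranspose_smul, Matrix.conjTranspose_mul, hSiH,
      Matrix.smul_mul, Matrix.mul_smul, Matrix.trace_smul, Matrix.trace_smul, hT2,
      ← Matrix.mul_assoc]
    simp [smul_eq_mul, sq]
    ring
  rw [tA, tB] at hnuc
  rw [hfrob]
  have heq : (1 / (2 * σ)) * (σ ^ 2 * T2) = σ / 2 * T2 := by
    field_simp
  rw [heq]
  linarith

lemma dir2 {n q : ℕ} (Z W : Matrix (Fin n) (Fin q) ℝ) {σ ε : ℝ} (hσ : 0 < σ) (hε : 0 < ε) :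
    ∃ S : Matrix (Fin n) (Fin n) ℝ, S.IsHermitian ∧
      (S - σ • (1 : Matrix (Fin n) (Fin n) ℝ)).PosSemidef ∧
      (1 / 2) * (Zᴴ * S⁻¹ * Z).trace + (1 / 2) * S.trace
        ≤ nucNorm W + ((1 / (2 * σ)) * frobNorm (Z - W) ^ 2 + (n / 2) * σ) + n * ε := by
  obtain ⟨A, hApsd, hblock, htrA, htrWAW⟩ := exists_good_A W hε
  refine ⟨A + σ • 1, hApsd.1.add (smul_one_isHermitian σ), by rwa [add_sub_cancel_right], ?_⟩
  have hSpd : (A + σ • (1 : Matrix (Fin n) (Fin n) ℝ)).PosDef :=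
    Matrix.PosDef.posSemidef_add hApsd (smul_one_posDef hσ)
  have hb2 := blockPSD (smul_one_posDef (m := n) hσ).posSemidef (σ⁻¹ • (Z - W))
  have e1 : (σ • (1 : Matrix (Fin n) (Fin n) ℝ)) * (σ⁻¹ • (Z - W)) = Z - W := by
    rw [Matrix.smul_mul, Matrix.mul_smul, Matrix.one_mul, smul_smul,
      mul_inv_cancel₀ hσ.ne', one_smul]
  have e2 : (σ⁻¹ • (Z - W))ᴴ * (σ • (1 : Matrix (Fin n) (Fin n) ℝ)) = (Z - W)ᴴ := by
    rw [Matrix.conjTranspose_smul, Matrix.smul_mul, Matrix.mul_smul, Matrix.mul_one,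
      smul_smul]
    norm_num [inv_mul_cancel₀ hσ.ne']
  have e3 : (σ⁻¹ • (Z - W))ᴴ * (σ • (1 : Matrix (Fin n) (Fin n) ℝ)) * (σ⁻¹ • (Z - W))
      = σ⁻¹ • ((Z - W)ᴴ * (Z - W)) := by
    rw [e2, Matrix.mul_smul]
  rw [e3, e1, e2] at hb2
  have hsum := hblock.add hb2
  rw [Matrix.fromBlocks_add] at hsum
  have eWV : W + (Z - W) = Z := by abel
  have eWVt : Wᴴ + (Z - W)ᴴ = Zᴴ := by rw [← Matrix.conjTranspose_add, eWV]
  rw [eWV, eWVt] at hsum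
  have hst := schurTrace hSpd hsum
  have htrV : ((Z - W)ᴴ * (Z - W)).trace = frobNorm (Z - W) ^ 2 := (frobNorm_sq _).symm
  have h2 : (Wᴴ * A⁻¹ * W + σ⁻¹ • ((Z - W)ᴴ * (Z - W))).trace
      = (Wᴴ * A⁻¹ * W).trace + σ⁻¹ * ((Z - W)ᴴ * (Z - W)).trace := by
    rw [Matrix.trace_add, Matrix.trace_smul]
    simp [smul_eq_mul]
  have h3 : (A + σ • (1 : Matrix (Fin n) (Fin n) ℝ)).trace = A.trace + σ * n := by
    rw [Matrix.trace_add, trace_smul_one]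
  rw [h2, htrV] at hst
  have hfrob_nn : 0 ≤ frobNorm (Z - W) ^ 2 := sq_nonneg _
  have hne : 0 ≤ (n : ℝ) * ε := by positivity
  have heq : σ⁻¹ * frobNorm (Z - W) ^ 2 = 2 * ((1 / (2 * σ)) * frobNorm (Z - W) ^ 2) := by
    field_simp
  rw [h3]
  linarith

/-- For `Z ∈ ℝ^{n×q}`, `σ > 0` and `ω_σ(W) = (1/2σ)‖W‖_F² + (n/2)σ`, the
inf-convolution of the nuclear norm with `ω_σ` equals the minimum over `S ⪰ σ·Id_n` of
`(1/2)Tr(Zᵀ S⁻¹ Z) + (1/2)Tr(S)`. -/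
theorem stmt7 {n q : ℕ} (Z : Matrix (Fin n) (Fin q) ℝ) (σ : ℝ) (hσ : 0 < σ) :
    (⨅ W : Matrix (Fin n) (Fin q) ℝ,
        ((nucNorm W + ((1 / (2 * σ)) * frobNorm (Z - W) ^ 2 + (n / 2) * σ) : ℝ) : EReal))
      = ⨅ S ∈ {S : Matrix (Fin n) (Fin n) ℝ | S.IsHermitian ∧
          (S - σ • (1 : Matrix (Fin n) (Fin n) ℝ)).PosSemidef},
          (((1 / 2) * (Zᵀ * S⁻¹ * Z).trace + (1 / 2) * S.trace : ℝ) : EReal) := by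

  have hZt : Zᴴ = Zᵀ := Matrix.conjTranspose_eq_transpose_of_trivial Z
  apply le_antisymm
  · refine le_iInf fun S => le_iInf fun hS => ?_
    obtain ⟨W, hW⟩ := dir1 Z hσ hS.1 hS.2
    refine le_trans (iInf_le _ W) ?_
    refine EReal.coe_le_coe_iff.mpr ?_
    rw [← hZt]
    exact hW
  · refine le_iInf fun W => ?_
    refine ereal_le_coe_of_forall fun δ hδ => ?_
    have hε : 0 < δ / (n + 1) := by positivity
    obtain ⟨S, hS1, hS2, hle⟩ := dir2 Z W hσ hε
    refine le_trans (iInf₂_le S ⟨hS1, hS2⟩) ?_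
    refine EReal.coe_le_coe_iff.mpr ?_
    rw [hZt] at hle
    have hnd : (n : ℝ) * (δ / (n + 1)) ≤ δ := by
      rw [mul_div_assoc', div_le_iff₀ (by positivity : (0:ℝ) < (n:ℝ) + 1)]
      nlinarith [Nat.cast_nonneg (α := ℝ) n]
    linarith
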